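/- arXiv:2103.11166 — 2 statements merged into one kernel-verified Lean document; each statement's English description precedes it below -/
import Mathlib

section
/- Let a > 0 and b ≥ 0 be real numbers and define F : ℝ → ℝ by F(s) = a·(σ(s)·s − ln(1+e^s)) − b·σ(s), where σ(s) = e^s/(1+e^s). Then F is strictly decreasing on (−∞, b/a], strictly increasing on [b/a, ∞), and F attains its global minimum uniquely at s = b/a; in particular F(s) ≥ F(b/a) for all s ∈ ℝ, with equality if and only if s = b/a. -/
lemma cSP_hasDerivAt (a b : ℝ) (F : ℝ → ℝ)
    (hF : ∀ s, F s = a * ((Real.exp s / (1 + Real.exp s)) * s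
        - Real.log (1 + Real.exp s)) - b * (Real.exp s / (1 + Real.exp s)))
    (s : ℝ) :
    HasDerivAt F ((a * s - b) * Real.exp s / (1 + Real.exp s) ^ 2) s := by
  have hd : (0:ℝ) < 1 + Real.exp s := by positivity
  have hd' : (1 + Real.exp s) ≠ 0 := ne_of_gt hd
  have he : HasDerivAt Real.exp (Real.exp s) s := Real.hasDerivAt_exp s
  have hden : HasDerivAt (fun t => 1 + Real.exp t) (Real.exp s) s := by
    exact he.const_add 1
  have hσ : HasDerivAt (fun t => Real.exp t / (1 + Real.exp t))
      ((Real.exp s * (1 + Real.exp s) - Real.exp s * Real.exp s) / (1 + Real.exp s) ^ 2) s :=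
    he.div hden hd'
  have hlog : HasDerivAt (fun t => Real.log (1 + Real.exp t))
      (Real.exp s / (1 + Real.exp s)) s := by
    simpa using hden.log hd'
  have hid : HasDerivAt (fun t : ℝ => t) 1 s := hasDerivAt_id s
  have h1 : HasDerivAt (fun t => a * ((Real.exp t / (1 + Real.exp t)) * t
      - Real.log (1 + Real.exp t)) - b * (Real.exp t / (1 + Real.exp t)))
      (a * (((Real.exp s * (1 + Real.exp s) - Real.exp s * Real.exp s) / (1 + Real.exp s) ^ 2) * s
        + (Real.exp s / (1 + Real.exp s)) * 1 - Real.exp s / (1 + Real.exp s))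
        - b * ((Real.exp s * (1 + Real.exp s) - Real.exp s * Real.exp s) / (1 + Real.exp s) ^ 2)) s :=
    (((hσ.mul hid).sub hlog).const_mul a).sub (hσ.const_mul b)
  have hFe : F = fun t => a * ((Real.exp t / (1 + Real.exp t)) * t
      - Real.log (1 + Real.exp t)) - b * (Real.exp t / (1 + Real.exp t)) := funext hF
  rw [hFe]
  convert h1 using 1
  field_simp
  ring

/-- Pointwise analysis of the cSP loss integrand: for `a > 0` and `b ≥ 0`, the
function `F(s) = a·(σ(s)·s − ln(1+eˢ)) − b·σ(s)` with `σ(s) = eˢ/(1+eˢ)` is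
strictly decreasing on `(−∞, b/a]`, strictly increasing on `[b/a, ∞)`, and attains
its global minimum uniquely at `s = b/a`. -/
theorem cSP_integrand_unique_min
    (a b : ℝ) (ha : 0 < a) (hb : 0 ≤ b)
    (F : ℝ → ℝ)
    (hF : ∀ s, F s = a * ((Real.exp s / (1 + Real.exp s)) * s
        - Real.log (1 + Real.exp s)) - b * (Real.exp s / (1 + Real.exp s))) :
    StrictAntiOn F (Set.Iic (b / a)) ∧
    StrictMonoOn F (Set.Ici (b / a)) ∧
    (∀ s, F (b / a) ≤ F s) ∧
    (∀ s, F s = F (b / a) ↔ s = b / a) := by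
  have hder := cSP_hasDerivAt a b F hF
  have hcont : Continuous F := by
    have := fun s => (hder s).continuousAt
    exact continuous_iff_continuousAt.mpr this
  have hderiv : ∀ s, deriv F s = (a * s - b) * Real.exp s / (1 + Real.exp s) ^ 2 :=
    fun s => (hder s).deriv
  have hanti : StrictAntiOn F (Set.Iic (b / a)) := by
    apply strictAntiOn_of_deriv_neg (convex_Iic _) hcont.continuousOn
    intro x hx
    rw [interior_Iic] at hx
    rw [hderiv]
    have hx' : a * x < b := by
      have := (lt_div_iff₀ ha).mp hx
      linarith [mul_comm x a]
    have hnum : a * x - b < 0 := by linarith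
    have hden : (0:ℝ) < (1 + Real.exp x) ^ 2 := by positivity
    have : (a * x - b) * Real.exp x < 0 :=
      mul_neg_of_neg_of_pos hnum (Real.exp_pos x)
    exact div_neg_of_neg_of_pos this hden
  have hmono : StrictMonoOn F (Set.Ici (b / a)) := by
    apply strictMonoOn_of_deriv_pos (convex_Ici _) hcont.continuousOn
    intro x hx
    rw [interior_Ici] at hx
    rw [hderiv]
    have hx' : b < a * x := by
      have := (div_lt_iff₀ ha).mp hx
      linarith [mul_comm x a]
    have hnum : 0 < a * x - b := by linarith
    positivity
  have hmin : ∀ s, F (b / a) ≤ F s := by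
    intro s
    rcases lt_trichotomy s (b / a) with h | h | h
    · exact le_of_lt (hanti (Set.mem_Iic.mpr h.le) Set.self_mem_Iic h)
    · simp [h]
    · exact le_of_lt (hmono Set.self_mem_Ici (Set.mem_Ici.mpr h.le) h)
  refine ⟨hanti, hmono, hmin, fun s => ⟨fun h => ?_, fun h => by rw [h]⟩⟩
  by_contra hne
  rcases lt_or_gt_of_ne hne with hlt | hgt
  · exact absurd h (ne_of_gt (hanti (Set.mem_Iic.mpr hlt.le) Set.self_mem_Iic hlt))
  · exact absurd h (ne_of_gt (hmono Set.self_mem_Ici (Set.mem_Ici.mpr hgt.le) hgt))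
end

section
/- Let Z be a measurable space, let Q_g be a finite measure on Z, let ψ* : Z → [0,∞) be measurable, and set Q_r = Q_g.withDensity ψ* (so ψ* is a density of Q_r with respect to Q_g); assume Q_r is a finite measure. Then for every measurable function ψ : Z → ℝ, the population cSP loss satisfies L_c(ψ) ≥ L_c(ψ*), i.e., the true density ratio ψ* is a global minimizer of L_c over all measurable real-valued functions on Z. -/
open MeasureTheory Real
open scoped ENNReal NNReal

/-- The _root_.sigmoid function. -/
noncomputable def sigmoid (t : ℝ) : ℝ := Real.exp t / (1 + Real.exp t)

/-- The softplus function. -/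
noncomputable def softplus (t : ℝ) : ℝ := Real.log (1 + Real.exp t)

lemma one_add_exp_pos (t : ℝ) : 0 < 1 + Real.exp t := by positivity

lemma _root_.sigmoid_nonneg (t : ℝ) : 0 ≤ _root_.sigmoid t := by
  unfold _root_.sigmoid; positivity

lemma _root_.sigmoid_le_one (t : ℝ) : _root_.sigmoid t ≤ 1 := by
  unfold _root_.sigmoid
  rw [div_le_one (one_add_exp_pos t)]
  linarith

-- key convexity inequality: softplus t - softplus r ≤ _root_.sigmoid t * (t - r)
lemma key (r t : ℝ) : softplus t - softplus r ≤ _root_.sigmoid t * (t - r) := by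
  set s := _root_.sigmoid t with hs
  have hs0 : 0 ≤ s := _root_.sigmoid_nonneg t
  have hs1 : s ≤ 1 := _root_.sigmoid_le_one t
  have hconv := convexOn_exp.2 (Set.mem_univ (r - t)) (Set.mem_univ (0:ℝ))
      hs0 (by linarith : (0:ℝ) ≤ 1 - s) (by ring)
  simp only [smul_eq_mul, mul_zero, add_zero, Real.exp_zero, mul_one] at hconv
  -- hconv : exp (s * (r - t)) ≤ s * exp (r - t) + (1 - s)
  have hpos : (0:ℝ) < Real.exp (s * (r - t)) := Real.exp_pos _
  have hlog : s * (r - t) ≤ Real.log (s * Real.exp (r - t) + (1 - s)) := by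
    calc s * (r - t) = Real.log (Real.exp (s * (r - t))) := (Real.log_exp _).symm
    _ ≤ Real.log (s * Real.exp (r - t) + (1 - s)) := Real.log_le_log hpos hconv
  have heq : s * Real.exp (r - t) + (1 - s) = (1 + Real.exp r) / (1 + Real.exp t) := by
    rw [hs]; unfold _root_.sigmoid
    rw [Real.exp_sub]
    field_simp
    ring
  rw [heq, Real.log_div (by positivity) (by positivity)] at hlog
  unfold softplus
  nlinarith [hlog]

lemma pointwise_min (r t : ℝ) :
    -(softplus r) ≤ _root_.sigmoid t * t - softplus t - r * _root_.sigmoid t := by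
  have := key r t
  nlinarith

lemma softplus_zero : softplus 0 = Real.log 2 := by
  unfold softplus; norm_num

lemma bound_lower (t : ℝ) : -(Real.log 2) ≤ _root_.sigmoid t * t - softplus t := by
  have := pointwise_min 0 t
  rw [softplus_zero] at this
  linarith

lemma bound_upper (t : ℝ) : _root_.sigmoid t * t - softplus t ≤ 0 := by
  rcases le_or_gt t 0 with h | h
  · have h1 : _root_.sigmoid t * t ≤ 0 := mul_nonpos_of_nonneg_of_nonpos (_root_.sigmoid_nonneg t) h
    have h2 : 0 ≤ softplus t := by
      unfold softplus
      have : (1:ℝ) ≤ 1 + Real.exp t := by linarith [Real.exp_pos t]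
      simpa using Real.log_nonneg this
    linarith
  · have h1 : _root_.sigmoid t * t ≤ t := by
      nlinarith [_root_.sigmoid_le_one t, _root_.sigmoid_nonneg t]
    have h2 : t ≤ softplus t := by
      unfold softplus
      calc t = Real.log (Real.exp t) := (Real.log_exp t).symm
      _ ≤ Real.log (1 + Real.exp t) := Real.log_le_log (Real.exp_pos t) (by linarith)
    linarith

lemma continuous_sigmoid' : Continuous _root_.sigmoid := by
  unfold _root_.sigmoid
  exact Real.continuous_exp.div (by continuity) (fun t => by positivity)

lemma continuous_softplus : Continuous softplus := by
  exact (continuous_const.add Real.continuous_exp).log (fun t => (one_add_exp_pos t).ne')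

/-- The population cSP loss of `ψ` with respect to a fake measure `Qg` and a
real measure `Qr`. -/
noncomputable def cSPLoss {Z : Type*} [MeasurableSpace Z]
    (Qg Qr : Measure Z) (ψ : Z → ℝ) : ℝ :=
  ∫ z, (_root_.sigmoid (ψ z) * ψ z - softplus (ψ z)) ∂Qg - ∫ z, _root_.sigmoid (ψ z) ∂Qr

/-- The true density ratio `ψ*` of `Qr` with respect to `Qg` is a global
minimizer of the population cSP loss over all measurable real-valued
functions. -/
theorem cSPLoss_global_min_at_density
    {Z : Type*} [MeasurableSpace Z]
    (Qg : Measure Z) [IsFiniteMeasure Qg]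
    (ψstar : Z → ℝ) (hψstar_meas : Measurable ψstar)
    (hψstar_nonneg : ∀ z, 0 ≤ ψstar z)
    (Qr : Measure Z)
    (hQr : Qr = Qg.withDensity (fun z => ENNReal.ofReal (ψstar z)))
    [IsFiniteMeasure Qr]
    (ψ : Z → ℝ) (hψ : Measurable ψ) :
    cSPLoss Qg Qr ψstar ≤ cSPLoss Qg Qr ψ := by
  -- rewrite the Qr-integral as a Qg-integral with density
  have hrw : ∀ (φ : Z → ℝ), Measurable φ →
      ∫ z, _root_.sigmoid (φ z) ∂Qr = ∫ z, ψstar z * _root_.sigmoid (φ z) ∂Qg := by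
    intro φ hφ
    have hmeas : Measurable (fun z => (ψstar z).toNNReal) := hψstar_meas.real_toNNReal
    have h1 : Qr = Qg.withDensity (fun z => ((ψstar z).toNNReal : ℝ≥0∞)) := hQr
    rw [h1, integral_withDensity_eq_integral_smul hmeas]
    congr 1
    funext z
    simp [NNReal.smul_def, Real.coe_toNNReal _ (hψstar_nonneg z)]
  -- integrability of ψstar
  have hψstar_int : Integrable ψstar Qg := by
    have hlt : ∫⁻ z, ENNReal.ofReal (ψstar z) ∂Qg ≠ ⊤ := by
      have : ∫⁻ z, ENNReal.ofReal (ψstar z) ∂Qg = Qr Set.univ := by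
        rw [hQr, withDensity_apply _ MeasurableSet.univ, setLIntegral_univ]
      rw [this]
      exact measure_ne_top Qr _
    have := integrable_toReal_of_lintegral_ne_top
      (hψstar_meas.ennreal_ofReal.aemeasurable) hlt
    refine this.congr (ae_of_all _ fun z => ?_)
    exact ENNReal.toReal_ofReal (hψstar_nonneg z)
  -- integrability lemmas
  have hA : ∀ (φ : Z → ℝ), Measurable φ →
      Integrable (fun z => _root_.sigmoid (φ z) * φ z - softplus (φ z)) Qg := by
    intro φ hφ
    refine Integrable.mono' (integrable_const (Real.log 2)) ?_ (ae_of_all _ fun z => ?_)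
    · exact (((continuous_sigmoid'.measurable.comp hφ).mul hφ).sub
        (continuous_softplus.measurable.comp hφ)).aestronglyMeasurable
    · rw [Real.norm_eq_abs, abs_le]
      exact ⟨bound_lower _, le_trans (bound_upper _) (Real.log_nonneg (by norm_num))⟩
  have hB : ∀ (φ : Z → ℝ), Measurable φ →
      Integrable (fun z => ψstar z * _root_.sigmoid (φ z)) Qg := by
    intro φ hφ
    refine Integrable.mono' hψstar_int ?_ (ae_of_all _ fun z => ?_)
    · exact (hψstar_meas.mul (continuous_sigmoid'.measurable.comp hφ)).aestronglyMeasurable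
    · rw [Real.norm_eq_abs, abs_mul, abs_of_nonneg (hψstar_nonneg z),
        abs_of_nonneg (_root_.sigmoid_nonneg _)]
      nlinarith [_root_.sigmoid_le_one (φ z), hψstar_nonneg z]
  unfold cSPLoss
  rw [hrw ψ hψ, hrw ψstar hψstar_meas,
    ← integral_sub (hA ψstar hψstar_meas) (hB ψstar hψstar_meas),
    ← integral_sub (hA ψ hψ) (hB ψ hψ)]
  refine integral_mono ((hA ψstar hψstar_meas).sub (hB ψstar hψstar_meas))
    ((hA ψ hψ).sub (hB ψ hψ)) (fun z => ?_)
  have h1 := pointwise_min (ψstar z) (ψ z)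
  have h2 := pointwise_min (ψstar z) (ψstar z)
  simp only
  nlinarith
end
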